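/- Let γ ∈ (−1, 1), β ∈ (0, 1], a ∈ (0, 1), b > 0, and dataset sizes n₁, n₂ > 0. Let c_i = a + b n_i^{−β}, c_share = a + b (n₁+n₂)^{−β}, and define the two-firm Cournot profits Π_{i,ind} = ((2 − γ − 2c_i + γ c_{−i})/(4 − γ²))² and Π_share = ((2 − γ)(1 − c_share)/(4 − γ²))². Assume 2 − γ − 2c_i + γ c_{−i} > 0 for both i and (2 − γ)(1 − c_share) > 0. Then for each firm i ∈ {1, 2}: Π_share > Π_{i,ind} if and only if (2 − γ)(n_i^{−β} − (n₁+n₂)^{−β}) > γ (n_{−i}^{−β} − n_i^{−β}), where −i denotes the other firm. -/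

import Mathlib

/-- **Cournot full-data-sharing criterion (two firms).** With substitutability
`γ ∈ (-1, 1)`, learning difficulty `β ∈ (0, 1]`, cost parameters `a ∈ (0,1)`, `b > 0`,
data sizes `n₁, n₂ > 0`, individual costs `c_i = a + b n_i^{-β}`, shared cost
`c_share = a + b (n₁+n₂)^{-β}`, Cournot profits `Π_{i,ind} = ((2-γ-2c_i+γc_{-i})/(4-γ²))²`
and `Π_share = ((2-γ)(1-c_share)/(4-γ²))²`, assuming the bracketed terms are positive,
for each firm `i`: `Π_share > Π_{i,ind}` iff
`(2-γ)(n_i^{-β} - (n₁+n₂)^{-β}) > γ (n_{-i}^{-β} - n_i^{-β})`. -/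
theorem cournot_sharing_criterion
    (γ β a b n₁ n₂ : ℝ)
    (hγ₁ : -1 < γ) (hγ₂ : γ < 1) (hβ₁ : 0 < β) (hβ₂ : β ≤ 1)
    (ha₁ : 0 < a) (ha₂ : a < 1) (hb : 0 < b) (hn₁ : 0 < n₁) (hn₂ : 0 < n₂)
    (c₁ c₂ cs : ℝ)
    (hc₁ : c₁ = a + b * n₁ ^ (-β)) (hc₂ : c₂ = a + b * n₂ ^ (-β))
    (hcs : cs = a + b * (n₁ + n₂) ^ (-β))
    (hpos₁ : 0 < 2 - γ - 2 * c₁ + γ * c₂)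
    (hpos₂ : 0 < 2 - γ - 2 * c₂ + γ * c₁)
    (hposs : 0 < (2 - γ) * (1 - cs)) :
    (((2 - γ) * (1 - cs) / (4 - γ ^ 2)) ^ 2 > ((2 - γ - 2 * c₁ + γ * c₂) / (4 - γ ^ 2)) ^ 2 ↔
      (2 - γ) * (n₁ ^ (-β) - (n₁ + n₂) ^ (-β)) > γ * (n₂ ^ (-β) - n₁ ^ (-β))) ∧
    (((2 - γ) * (1 - cs) / (4 - γ ^ 2)) ^ 2 > ((2 - γ - 2 * c₂ + γ * c₁) / (4 - γ ^ 2)) ^ 2 ↔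
      (2 - γ) * (n₂ ^ (-β) - (n₁ + n₂) ^ (-β)) > γ * (n₁ ^ (-β) - n₂ ^ (-β))) := by
  have hd : (0:ℝ) < 4 - γ ^ 2 := by nlinarith
  have hd2 : (0:ℝ) < (4 - γ ^ 2) ^ 2 := by positivity
  have key : ∀ x : ℝ, 0 < x →
      (((2 - γ) * (1 - cs) / (4 - γ ^ 2)) ^ 2 > (x / (4 - γ ^ 2)) ^ 2 ↔
        x < (2 - γ) * (1 - cs)) := by
    intro x hx
    rw [gt_iff_lt, div_pow, div_pow, div_lt_div_iff_of_pos_right hd2,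
      pow_lt_pow_iff_left₀ hx.le hposs.le (by norm_num)]
  constructor
  · rw [key _ hpos₁]
    subst hc₁ hc₂ hcs
    constructor <;> intro h <;> nlinarith [hb]
  · rw [key _ hpos₂]
    subst hc₁ hc₂ hcs
    constructor <;> intro h <;> nlinarith [hb]
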